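/- arXiv:2202.00313 — 2 statements merged into one kernel-verified Lean document; each statement's English description precedes it below -/
import Mathlib

section
/- Let f be a strongly positive symplectic twist map of 𝕋^d×ℝ^d with generating function S, let G ∈ C²(𝕋^d), let f_ε be the symplectic twist map with generating function S_ε(q,Q) := S(q,Q) + εG(q), and let (F_ε)_{ε∈ℝ} be a continuous family of lifts of f_ε. Fix (m,n) ∈ ℤ^d×ℕ* with m and n coprime. Then the set J*_{(m,n)} := {ε ∈ ℝ : there exists a Lipschitz ℤ^d-periodic map γ: ℝ^d → ℝ^d such that for all q ∈ ℝ^d, π₁∘F_ε^n(q,γ(q)) = q+m and det(∂_p(π₁∘F_ε^n)(q,γ(q))) ≠ 0} is an open subset of ℝ. -/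
open Function Set Filter Topology MeasureTheory

noncomputable section

/-- `ℝ^d` with the Euclidean structure. -/
abbrev Ed (d : ℕ) := EuclideanSpace ℝ (Fin d)
/-- `ℂ^d`. -/
abbrev Cd (d : ℕ) := EuclideanSpace ℂ (Fin d)

variable {d : ℕ}

/-- The real vector associated with an integer vector `m ∈ ℤ^d`. -/
def intVec (d : ℕ) (m : Fin d → ℤ) : Ed d := WithLp.toLp 2 fun i => (m i : ℝ)

/-- The complex vector associated with an integer vector `m ∈ ℤ^d`. -/
def intVecC (d : ℕ) (m : Fin d → ℤ) : Cd d := WithLp.toLp 2 fun i => (m i : ℂ)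

/-- The canonical embedding `ℝ^d → ℂ^d`. -/
def complexify (q : Ed d) : Cd d := WithLp.toLp 2 fun i => (q i : ℂ)

/-- The standard pairing `⟨p, v⟩ = ∑ i, p i * v i` on `ℝ^d`. -/
def pairing (p v : Ed d) : ℝ := ∑ i, p i * v i

/-- The standard bilinear pairing on `ℂ^d`. -/
def pairingC (p v : Cd d) : ℂ := ∑ i, p i * v i

/-- `g` is a `C¹` diffeomorphism. -/
def IsC1Diffeo {X Y : Type*} [NormedAddCommGroup X] [NormedSpace ℝ X]
    [NormedAddCommGroup Y] [NormedSpace ℝ Y] (g : X → Y) : Prop :=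
  ContDiff ℝ 1 g ∧ ∃ ginv : Y → X, ContDiff ℝ 1 ginv ∧
    Function.LeftInverse ginv g ∧ Function.RightInverse ginv g

/-- `g` is a holomorphic diffeomorphism. -/
def IsHolDiffeo {X Y : Type*} [NormedAddCommGroup X] [NormedSpace ℂ X]
    [NormedAddCommGroup Y] [NormedSpace ℂ Y] (g : X → Y) : Prop :=
  Differentiable ℂ g ∧ ∃ ginv : Y → X, Differentiable ℂ ginv ∧
    Function.LeftInverse ginv g ∧ Function.RightInverse ginv g

/-- `F(q+m, p) = F(q, p) + (m, 0)` for all `m ∈ ℤ^d`: `F` is the lift of a map of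
`𝕋^d × ℝ^d`. -/
def IsZdLift (F : Ed d × Ed d → Ed d × Ed d) : Prop :=
  ∀ (m : Fin d → ℤ) (q p : Ed d),
    F (q + intVec d m, p) = ((F (q, p)).1 + intVec d m, (F (q, p)).2)

/-- `S` is a generating function for the lift `F`, i.e. `S(q+m, Q+m) = S(q, Q)` and
`P dQ - p dq = dS(q, Q)`; the latter means `∂₁S(q, Q(q,p)) = -p` and
`∂₂S(q, Q(q,p)) = P(q,p)`. -/
structure IsGenFun (F : Ed d × Ed d → Ed d × Ed d) (S : Ed d × Ed d → ℝ) : Prop where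
  periodic : ∀ (m : Fin d → ℤ) (q Q : Ed d), S (q + intVec d m, Q + intVec d m) = S (q, Q)
  dq : ∀ q p v : Ed d, fderiv ℝ (fun q' => S (q', (F (q, p)).1)) q v = -(pairing p v)
  dQ : ∀ q p v : Ed d, fderiv ℝ (fun Q' => S (q, Q')) (F (q, p)).1 v = pairing (F (q, p)).2 v

/-- `F : ℝ^d × ℝ^d → ℝ^d × ℝ^d` is a lift of a symplectic twist map of `𝕋^d × ℝ^d`
with generating function `S`. -/
structure IsSymplecticTwistLift (F : Ed d × Ed d → Ed d × Ed d)
    (S : Ed d × Ed d → ℝ) : Prop where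
  diffeo : IsC1Diffeo F
  lift : IsZdLift F
  twist : IsC1Diffeo (fun x : Ed d × Ed d => (x.1, (F x).1))
  genfun : IsGenFun F S

/-- The mixed second derivative `∂²_{qQ} S (q,Q) (v, v)`. -/
def mixedS (S : Ed d × Ed d → ℝ) (q Q v : Ed d) : ℝ :=
  fderiv ℝ (fun Q' => fderiv ℝ (fun q' => S (q', Q')) q v) Q v

/-- The symplectic twist map with `C²` generating function `S` is positive. -/
def PositiveGenFun (S : Ed d × Ed d → ℝ) : Prop :=
  ContDiff ℝ 2 S ∧ ∃ α : ℝ, 0 < α ∧ ∀ q Q v : Ed d, mixedS S q Q v ≤ -α * ‖v‖ ^ 2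

/-- The symplectic twist map with `C²` generating function `S` is strongly positive. -/
def StronglyPositiveGenFun (S : Ed d × Ed d → ℝ) : Prop :=
  ContDiff ℝ 2 S ∧ ∃ α β : ℝ, 0 < α ∧ 0 < β ∧
    ∀ q Q v : Ed d, -β * ‖v‖ ^ 2 ≤ mixedS S q Q v ∧ mixedS S q Q v ≤ -α * ‖v‖ ^ 2

/-- The second derivative `∂²_{qq} S (q, Q)` as a continuous bilinear map. -/
def hessqq (S : Ed d × Ed d → ℝ) (q Q : Ed d) : Ed d →L[ℝ] Ed d →L[ℝ] ℝ :=
  fderiv ℝ (fun q' => fderiv ℝ (fun q'' => S (q'', Q)) q') q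

/-- The second derivative `∂²_{QQ} S (q, Q)` as a continuous bilinear map. -/
def hessQQ (S : Ed d × Ed d → ℝ) (q Q : Ed d) : Ed d →L[ℝ] Ed d →L[ℝ] ℝ :=
  fderiv ℝ (fun Q' => fderiv ℝ (fun Q'' => S (q, Q'')) Q') Q

/-- The symplectic twist map with `C²` generating function `S` has bounded rate:
`‖∂²_{qq} S‖_∞ + ‖∂²_{QQ} S‖_∞ < ∞`. -/
def BoundedRateGenFun (S : Ed d × Ed d → ℝ) : Prop :=
  ContDiff ℝ 2 S ∧ ∃ C : ℝ, ∀ q Q : Ed d, ‖hessqq S q Q‖ + ‖hessQQ S q Q‖ ≤ C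

/-- `γ : ℝ^d → ℝ^d` is `ℤ^d`-periodic. -/
def ZdPeriodic (γ : Ed d → Ed d) : Prop :=
  ∀ (m : Fin d → ℤ) (q : Ed d), γ (q + intVec d m) = γ q

/-- A function `G : ℝ^d → ℝ` is `ℤ^d`-periodic, i.e. is a function on `𝕋^d`. -/
def ZdPeriodicFun (G : Ed d → ℝ) : Prop :=
  ∀ (m : Fin d → ℤ) (q : Ed d), G (q + intVec d m) = G q

/-- The graph of `γ` is Lagrangian: `∫₀¹ γ(ν(t))·ν'(t) dt = 0` for every `C¹` loop `ν`. -/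
def IsLagrangianGraph (γ : Ed d → Ed d) : Prop :=
  ∀ ν : ℝ → Ed d, ContDiff ℝ 1 ν → (∀ t : ℝ, ν (t + 1) = ν t) →
    ∫ t in (0:ℝ)..1, pairing (γ (ν t)) (deriv ν t) = 0

/-- The graph of `γ` is an `(m, n)`-periodic graph of `F`: `F^n(q, γ(q)) = (q+m, γ(q))`. -/
def IsPeriodicGraph (F : Ed d × Ed d → Ed d × Ed d) (m : Fin d → ℤ) (n : ℕ)
    (γ : Ed d → Ed d) : Prop :=
  ∀ q : Ed d, F^[n] (q, γ q) = (q + intVec d m, γ q)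

/-- `m ∈ ℤ^d` and `n ∈ ℕ` are coprime. -/
def CoprimeVec (m : Fin d → ℤ) (n : ℕ) : Prop :=
  Nat.gcd (Finset.univ.gcd fun i => (m i).natAbs) n = 1

/-- The graph of `γ`, as a subset of `ℝ^d × ℝ^d`. -/
def graphSet (γ : Ed d → Ed d) : Set (Ed d × Ed d) := {x : Ed d × Ed d | x.2 = γ x.1}

/-- `F` admits a Lipschitz Lagrangian `(m,n)`-periodic graph. -/
def HasLipLagPeriodicGraph (F : Ed d × Ed d → Ed d × Ed d) (m : Fin d → ℤ) (n : ℕ) : Prop :=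
  ∃ γ : Ed d → Ed d, (∃ K : NNReal, LipschitzWith K γ) ∧ ZdPeriodic γ ∧
    IsLagrangianGraph γ ∧ IsPeriodicGraph F m n γ

/-- The symplectic twist map lifted by `F` satisfies the analyticity property: there is a
holomorphic diffeomorphism of `ℂ^d × ℂ^d` extending `F`, satisfying the twist condition
and admitting a holomorphic generating function. -/
def SatisfiesAnalyticityProperty (F : Ed d × Ed d → Ed d × Ed d) : Prop :=
  ∃ Fc : Cd d × Cd d → Cd d × Cd d,
    IsHolDiffeo Fc ∧
    (∀ q p : Ed d, Fc (complexify q, complexify p)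
        = (complexify (F (q, p)).1, complexify (F (q, p)).2)) ∧
    IsHolDiffeo (fun x : Cd d × Cd d => (x.1, (Fc x).1)) ∧
    ∃ Sc : Cd d × Cd d → ℂ, Differentiable ℂ Sc ∧
      (∀ (m : Fin d → ℤ) (q Q : Cd d), Sc (q + intVecC d m, Q + intVecC d m) = Sc (q, Q)) ∧
      (∀ q p v : Cd d, fderiv ℂ (fun q' => Sc (q', (Fc (q, p)).1)) q v = -(pairingC p v)) ∧
      (∀ q p v : Cd d,
        fderiv ℂ (fun Q' => Sc (q, Q')) (Fc (q, p)).1 v = pairingC (Fc (q, p)).2 v)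

/-- `G : 𝕋^d → ℝ` admits a holomorphic extension to `ℂ^d`. -/
def HasHolomorphicExtension (G : Ed d → ℝ) : Prop :=
  ∃ Gc : Cd d → ℂ, Differentiable ℂ Gc ∧ ∀ q : Ed d, Gc (complexify q) = (G q : ℂ)

/-- `F` is the lift of a completely integrable map `f(q,p) = (q + ∇ℓ₀(p), p)` where
`ℓ₀` is `C²` and `∇ℓ₀` is a `C¹` diffeomorphism of `ℝ^d`. -/
def CompletelyIntegrableLift (F : Ed d × Ed d → Ed d × Ed d) : Prop :=
  ∃ (ℓ : Ed d → ℝ) (g : Ed d → Ed d), ContDiff ℝ 2 ℓ ∧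
    (∀ p v : Ed d, fderiv ℝ ℓ p v = pairing (g p) v) ∧
    IsC1Diffeo g ∧ ∀ q p : Ed d, F (q, p) = (q + g p, p)

/-- The `ν`-th Fourier coefficient of a `ℤ^d`-periodic function `G : ℝ^d → ℝ`. -/
def fourierCoeffT (G : Ed d → ℝ) (ν : Fin d → ℤ) : ℂ :=
  ∫ q in {q : Ed d | ∀ i, q i ∈ Set.Icc (0:ℝ) 1},
    (G q : ℂ) * Complex.exp (-(2 * Real.pi * Complex.I) * ∑ i, (ν i : ℂ) * (q i : ℂ))

/-- The sequence `(x_j)_{j ∈ ℤ}` is action-minimizing for the generating function `S`. -/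
def IsMinimizingSeq (S : Ed d × Ed d → ℝ) (x : ℤ → Ed d) : Prop :=
  ∀ (k : ℤ) (N : ℕ) (w : ℕ → Ed d), w 0 = x k → w N = x (k + N) →
    ∑ j ∈ Finset.range N, S (x (k + j), x (k + j + 1)) ≤
      ∑ j ∈ Finset.range N, S (w j, w (j + 1))

/-- `x : ℤ → ℝ^d × ℝ^d` is a full orbit of `F`. -/
def IsFullOrbit (F : Ed d × Ed d → Ed d × Ed d) (x : ℤ → Ed d × Ed d) : Prop :=
  ∀ j : ℤ, x (j + 1) = F (x j)

/-- The orbit of `a` under `F` is action-minimizing (its projection is a minimizing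
sequence). -/
def OrbitMinimizing (F : Ed d × Ed d → Ed d × Ed d) (S : Ed d × Ed d → ℝ)
    (a : Ed d × Ed d) : Prop :=
  ∃ x : ℤ → Ed d × Ed d, x 0 = a ∧ IsFullOrbit F x ∧ IsMinimizingSeq S fun j => (x j).1

/-- The superlinearity condition `S(q,Q)/‖Q-q‖ → ∞` as `‖Q-q‖ → ∞`. -/
def SuperlinearGenFun (S : Ed d × Ed d → ℝ) : Prop :=
  ∀ A : ℝ, ∃ R : ℝ, ∀ q Q : Ed d, R ≤ ‖Q - q‖ → A * ‖Q - q‖ ≤ S (q, Q)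

/-- The determinant of `∂_p (π₁ ∘ F^n) (q, p)`. -/
def twistDet (F : Ed d × Ed d → Ed d × Ed d) (n : ℕ) (q p : Ed d) : ℝ :=
  LinearMap.det ((fderiv ℝ (fun p' => (F^[n] (q, p')).1) p : Ed d →L[ℝ] Ed d)
    : Ed d →ₗ[ℝ] Ed d)

/-- The set `A ⊆ ℝ` is infinite with points accumulating to `0`. -/
def InfiniteAccumulatingAtZero (A : Set ℝ) : Prop :=
  A.Infinite ∧ ∀ δ : ℝ, 0 < δ → ∃ ε ∈ A, ε ≠ 0 ∧ |ε| < δ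



/-! ### Auxiliary machinery for the proof of `statement5` -/

namespace Statement5Aux

variable {d : ℕ}

lemma pairing_eq_inner (a v : Ed d) : pairing a v = inner ℝ a v := by
  simp [pairing, PiLp.inner_apply, RCLike.inner_apply, conj_trivial, mul_comm]

lemma pairing_ext {a b : Ed d} (h : ∀ v, pairing a v = pairing b v) : a = b := by
  ext i
  simpa [pairing, EuclideanSpace.single_apply, mul_ite, Finset.sum_ite_eq']
    using h (EuclideanSpace.single i 1)

lemma pairing_add_smul (p g v : Ed d) (ε : ℝ) :
    pairing (p + ε • g) v = pairing p v + ε * pairing g v := by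
  simp [pairing, add_mul, Finset.sum_add_distrib, Finset.mul_sum, mul_assoc]

/-- The gradient of a scalar function on `ℝ^d`. -/
def gradOf (G : Ed d → ℝ) (q : Ed d) : Ed d :=
  (InnerProductSpace.toDual ℝ (Ed d)).symm (fderiv ℝ G q)

lemma gradOf_spec {G : Ed d → ℝ} (q v : Ed d) :
    fderiv ℝ G q v = pairing (gradOf G q) v := by
  rw [pairing_eq_inner, gradOf, InnerProductSpace.toDual_symm_apply]

lemma gradOf_contDiff {G : Ed d → ℝ} (hG : ContDiff ℝ 2 G) :
    ContDiff ℝ 1 (gradOf G) := by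
  have h1 : ContDiff ℝ 1 (fderiv ℝ G) := hG.fderiv_right (by norm_num)
  exact ((InnerProductSpace.toDual ℝ (Ed d)).symm.contDiff).comp h1

lemma fderiv_fst_eq {S : Ed d × Ed d → ℝ} (hS : ContDiff ℝ 2 S) (q Q v : Ed d) :
    fderiv ℝ (fun q' => S (q', Q)) q v = fderiv ℝ S (q, Q) (v, 0) := by
  have h1 : HasFDerivAt (fun q' : Ed d => (q', Q))
      ((ContinuousLinearMap.id ℝ (Ed d)).prod (0 : Ed d →L[ℝ] Ed d)) q :=
    (hasFDerivAt_id q).prodMk (hasFDerivAt_const Q q)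
  have h2 : HasFDerivAt S (fderiv ℝ S (q, Q)) (q, Q) :=
    ((hS.differentiable (by norm_num)) (q, Q)).hasFDerivAt
  have h3 : HasFDerivAt (fun q' => S (q', Q))
      ((fderiv ℝ S (q, Q)).comp ((ContinuousLinearMap.id ℝ (Ed d)).prod 0)) q := h2.comp q h1
  rw [h3.fderiv]; rfl

lemma mono_of_strongpos {S : Ed d × Ed d → ℝ} (hpos : StronglyPositiveGenFun S)
    (q Q₁ Q₂ : Ed d)
    (h : ∀ v, fderiv ℝ (fun q' => S (q', Q₁)) q v = fderiv ℝ (fun q' => S (q', Q₂)) q v) :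
    Q₁ = Q₂ := by
  obtain ⟨hS, α, β, hα, hβ, hbound⟩ := hpos
  set w := Q₂ - Q₁ with hw
  set g : Ed d → ℝ := fun Q => fderiv ℝ S (q, Q) (w, 0) with hgdef
  have hg : ContDiff ℝ 1 g := by
    have h1 : ContDiff ℝ 1 (fderiv ℝ S) := hS.fderiv_right (by norm_num)
    have h2 : ContDiff ℝ 1 (fun Q : Ed d => fderiv ℝ S (q, Q)) :=
      h1.comp (contDiff_const.prodMk contDiff_id)
    exact (ContinuousLinearMap.apply ℝ ℝ ((w, 0) : Ed d × Ed d)).contDiff.comp h2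
  have hgq : ∀ Q, g Q = fderiv ℝ (fun q' => S (q', Q)) q w := fun Q =>
    (fderiv_fst_eq hS q Q w).symm
  have hgfun : (fun Q' => fderiv ℝ (fun q' => S (q', Q')) q w) = g :=
    funext fun Q => (hgq Q).symm
  set ψ : ℝ → ℝ := fun t => g (Q₁ + t • w) with hψ
  have hder : ∀ t : ℝ, HasDerivAt ψ (mixedS S q (Q₁ + t • w) w) t := by
    intro t
    have hline : HasDerivAt (fun s : ℝ => Q₁ + s • w) w t := by
      simpa using ((hasDerivAt_id t).smul_const w).const_add Q₁
    have hgd : HasFDerivAt g (fderiv ℝ g (Q₁ + t • w)) (Q₁ + t • w) :=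
      ((hg.differentiable one_ne_zero) _).hasFDerivAt
    have hres := hgd.comp_hasDerivAt t hline
    have hmix : mixedS S q (Q₁ + t • w) w = fderiv ℝ g (Q₁ + t • w) w := by
      rw [mixedS, hgfun]
    rw [hmix]; exact hres
  have hcont : ContinuousOn ψ (Set.Icc 0 1) :=
    Continuous.continuousOn
      (hg.continuous.comp (continuous_const.add (continuous_id.smul continuous_const)))
  obtain ⟨c, _, hc⟩ := exists_hasDerivAt_eq_slope ψ (fun t => mixedS S q (Q₁ + t • w) w)
    zero_lt_one hcont (fun t _ => hder t)
  have hψ1 : ψ 1 = ψ 0 := by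
    have e1 : Q₁ + (1 : ℝ) • w = Q₂ := by rw [one_smul, hw]; abel
    have e0 : Q₁ + (0 : ℝ) • w = Q₁ := by rw [zero_smul, add_zero]
    rw [hψ]; simp only [e1, e0]
    rw [hgq Q₂, hgq Q₁, h w]
  have h0 : mixedS S q (Q₁ + c • w) w = 0 := by rw [hc, hψ1]; ring
  have hle := (hbound q (Q₁ + c • w) w).2
  rw [h0] at hle
  have hww : ‖w‖ ^ 2 ≤ 0 := by nlinarith
  have hw0 : w = 0 := by
    have h1 := norm_nonneg w
    have hn : ‖w‖ = 0 := by nlinarith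
    exact norm_eq_zero.mp hn
  exact (sub_eq_zero.mp hw0).symm

lemma Feps_eq {F Fe : Ed d × Ed d → Ed d × Ed d} {S : Ed d × Ed d → ℝ} {G : Ed d → ℝ}
    (hGreg : ContDiff ℝ 2 G) (hpos : StronglyPositiveGenFun S)
    (hF : IsGenFun F S) (ε : ℝ) (hfe : IsGenFun Fe (fun x => S x + ε * G x.1))
    (q p : Ed d) : Fe (q, p) = F (q, p + ε • gradOf G q) := by
  have hS : ContDiff ℝ 2 S := hpos.1
  set p' : Ed d := p + ε • gradOf G q with hp'
  set Q₁ : Ed d := (Fe (q, p)).1 with hQ₁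
  set Q₂ : Ed d := (F (q, p')).1 with hQ₂
  have hdA : DifferentiableAt ℝ (fun q' : Ed d => S (q', Q₁)) q := by
    exact ((hS.differentiable (by norm_num)) (q, Q₁)).comp q
      ((differentiableAt_id).prodMk (differentiableAt_const _))
  have hdB : DifferentiableAt ℝ (fun q' : Ed d => ε * G q') q :=
    ((hGreg.differentiable (by norm_num)) q).const_mul ε
  have key1 : ∀ v, fderiv ℝ (fun q' => S (q', Q₁)) q v = -(pairing p' v) := by
    intro v
    have h1 := hfe.dq q p v
    have h2 : fderiv ℝ (fun q' => S (q', Q₁) + ε * G q') q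
        = fderiv ℝ (fun q' => S (q', Q₁)) q + fderiv ℝ (fun q' => ε * G q') q :=
      fderiv_add hdA hdB
    have h3 : fderiv ℝ (fun q' => ε * G q') q = ε • fderiv ℝ G q :=
      fderiv_const_mul ((hGreg.differentiable (by norm_num)) q) ε
    have h4 : fderiv ℝ (fun q' => S (q', Q₁)) q v + ε * fderiv ℝ G q v = -(pairing p v) := by
      calc fderiv ℝ (fun q' => S (q', Q₁)) q v + ε * fderiv ℝ G q v
          = (fderiv ℝ (fun q' => S (q', Q₁)) q + fderiv ℝ (fun q' => ε * G q') q) v := by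
            rw [h3]; simp
        _ = fderiv ℝ (fun q' => S (q', Q₁) + ε * G q') q v := by rw [h2]
        _ = -(pairing p v) := h1
    rw [gradOf_spec (G := G) q v] at h4
    rw [hp', pairing_add_smul]
    linarith
  have key2 : ∀ v, fderiv ℝ (fun q' => S (q', Q₂)) q v = -(pairing p' v) := hF.dq q p'
  have hQeq : Q₁ = Q₂ := mono_of_strongpos hpos q Q₁ Q₂ (fun v => by rw [key1 v, key2 v])
  have hsnd : (Fe (q, p)).2 = (F (q, p')).2 := by
    apply pairing_ext
    intro v
    have h1 := hfe.dQ q p v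
    have h2 : fderiv ℝ (fun Q' => S (q, Q') + ε * G q) Q₁ = fderiv ℝ (fun Q' => S (q, Q')) Q₁ :=
      fderiv_add_const _
    have h3 := hF.dQ q p' v
    rw [← h1, h2, hQeq, h3]
  exact Prod.ext (by rw [← hQ₁, hQeq, hQ₂]) hsnd

/-- The suspension of the family `(q,p) ↦ F (q, p + ε • g q)` over the parameter `ε`. -/
def Hm (F : Ed d × Ed d → Ed d × Ed d) (g : Ed d → Ed d) :
    ℝ × (Ed d × Ed d) → ℝ × (Ed d × Ed d) :=
  fun z => (z.1, F (z.2.1, z.2.2 + z.1 • g z.2.1))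

lemma Hm_contDiff {F : Ed d × Ed d → Ed d × Ed d} {g : Ed d → Ed d}
    (hF : ContDiff ℝ 1 F) (hg : ContDiff ℝ 1 g) : ContDiff ℝ 1 (Hm F g) := by
  apply contDiff_fst.prodMk
  apply hF.comp
  exact (contDiff_snd.fst).prodMk
    ((contDiff_snd.snd).add (contDiff_fst.smul (hg.comp contDiff_snd.fst)))

lemma iter_contDiff {X : Type*} [NormedAddCommGroup X] [NormedSpace ℝ X]
    {f : X → X} (hf : ContDiff ℝ 1 f) (n : ℕ) : ContDiff ℝ 1 f^[n] := by
  induction n with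
  | zero => simpa using contDiff_id
  | succ k ih => rw [Function.iterate_succ]; exact ih.comp hf

lemma Hm_iter_eq {F : Ed d × Ed d → Ed d × Ed d} {g : Ed d → Ed d}
    {Fe : ℝ → Ed d × Ed d → Ed d × Ed d}
    (hFe : ∀ ε q p, Fe ε (q, p) = F (q, p + ε • g q)) (n : ℕ) (ε : ℝ) (x : Ed d × Ed d) :
    (Hm F g)^[n] (ε, x) = (ε, (Fe ε)^[n] x) := by
  induction n with
  | zero => simp
  | succ k ih =>
      rw [Function.iterate_succ_apply', ih, Function.iterate_succ_apply']
      show (ε, F (((Fe ε)^[k] x).1, ((Fe ε)^[k] x).2 + ε • g ((Fe ε)^[k] x).1)) = _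
      rw [← hFe ε ((Fe ε)^[k] x).1 ((Fe ε)^[k] x).2]

def proj21 (d : ℕ) : (ℝ × (Ed d × Ed d)) →L[ℝ] Ed d :=
  (ContinuousLinearMap.fst ℝ (Ed d) (Ed d)).comp (ContinuousLinearMap.snd ℝ ℝ (Ed d × Ed d))

def Jmap (d : ℕ) : Ed d →L[ℝ] ℝ × (Ed d × Ed d) :=
  ((0 : Ed d →L[ℝ] ℝ)).prod (((0 : Ed d →L[ℝ] Ed d)).prod (ContinuousLinearMap.id ℝ (Ed d)))

def Bmap (F : Ed d × Ed d → Ed d × Ed d) (g : Ed d → Ed d) (n : ℕ)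
    (z : ℝ × (Ed d × Ed d)) : Ed d →L[ℝ] Ed d :=
  (proj21 d).comp ((fderiv ℝ ((Hm F g)^[n]) z).comp (Jmap d))

lemma Bmap_hasFDeriv {F : Ed d × Ed d → Ed d × Ed d} {g : Ed d → Ed d}
    (hF : ContDiff ℝ 1 F) (hg : ContDiff ℝ 1 g) (n : ℕ) (z : ℝ × (Ed d × Ed d)) :
    HasFDerivAt (fun p' => (((Hm F g)^[n]) (z.1, (z.2.1, p'))).2.1) (Bmap F g n z) z.2.2 := by
  have hι : HasFDerivAt (fun p' : Ed d => ((z.1, (z.2.1, p')) : ℝ × (Ed d × Ed d)))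
      (Jmap d) z.2.2 :=
    (hasFDerivAt_const z.1 _).prodMk ((hasFDerivAt_const z.2.1 _).prodMk (hasFDerivAt_id _))
  have hH : HasFDerivAt ((Hm F g)^[n]) (fderiv ℝ ((Hm F g)^[n]) z) z :=
    (((iter_contDiff (Hm_contDiff hF hg) n).differentiable one_ne_zero) z).hasFDerivAt
  have hcomp := hH.comp z.2.2 (by simpa using hι)
  exact (proj21 d).hasFDerivAt.comp z.2.2 hcomp

lemma Bmap_cont {F : Ed d × Ed d → Ed d × Ed d} {g : Ed d → Ed d}
    (hF : ContDiff ℝ 1 F) (hg : ContDiff ℝ 1 g) (n : ℕ) :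
    Continuous fun z => LinearMap.det ((Bmap F g n z : Ed d →L[ℝ] Ed d) : Ed d →ₗ[ℝ] Ed d) := by
  have h1 : Continuous (fderiv ℝ ((Hm F g)^[n])) :=
    (iter_contDiff (Hm_contDiff hF hg) n).continuous_fderiv one_ne_zero
  have h2 : Continuous fun z => (proj21 d).comp ((fderiv ℝ ((Hm F g)^[n]) z).comp (Jmap d)) :=
    continuous_const.clm_comp (h1.clm_comp continuous_const)
  exact ContinuousLinearMap.continuous_det.comp h2

lemma solve_local {Φ : ℝ × (Ed d × Ed d) → Ed d} (hΦ : ContDiff ℝ 1 Φ)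
    {z₀ : ℝ × (Ed d × Ed d)} {B : Ed d →L[ℝ] Ed d}
    (hB : HasFDerivAt (fun p' => Φ (z₀.1, (z₀.2.1, p'))) B z₀.2.2)
    (hdet : LinearMap.det ((B : Ed d →L[ℝ] Ed d) : Ed d →ₗ[ℝ] Ed d) ≠ 0)
    (c : Ed d) (hc : Φ z₀ = c) :
    ∃ (σ : ℝ × Ed d → Ed d) (r : ℝ), 0 < r ∧ ContDiffAt ℝ 1 σ (z₀.1, z₀.2.1) ∧
      σ (z₀.1, z₀.2.1) = z₀.2.2 ∧
      (∀ᶠ y in 𝓝 (z₀.1, z₀.2.1), Φ (y.1, (y.2, σ y)) = c) ∧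
      (∀ z z' : ℝ × (Ed d × Ed d), z ∈ Metric.ball z₀ r → z' ∈ Metric.ball z₀ r →
        z.1 = z'.1 → z.2.1 = z'.2.1 → Φ z = Φ z' → z = z') := by
  classical
  set Θ : ℝ × (Ed d × Ed d) → (ℝ × Ed d) × Ed d := fun z => ((z.1, z.2.1), Φ z) with hΘdef
  have hΘ : ContDiff ℝ 1 Θ := (contDiff_fst.prodMk (contDiff_snd.fst)).prodMk hΦ
  set Pmap : (ℝ × (Ed d × Ed d)) →L[ℝ] ℝ × Ed d :=
    (ContinuousLinearMap.fst ℝ ℝ (Ed d × Ed d)).prod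
      ((ContinuousLinearMap.fst ℝ (Ed d) (Ed d)).comp (ContinuousLinearMap.snd ℝ ℝ (Ed d × Ed d)))
    with hPdef
  set DΦ : (ℝ × (Ed d × Ed d)) →L[ℝ] Ed d := fderiv ℝ Φ z₀ with hDΦ
  have hΦd : HasFDerivAt Φ DΦ z₀ := ((hΦ.differentiable one_ne_zero) z₀).hasFDerivAt
  set T : (ℝ × (Ed d × Ed d)) →L[ℝ] (ℝ × Ed d) × Ed d := Pmap.prod DΦ with hT
  have hTd : HasFDerivAt Θ T z₀ := (Pmap.hasFDerivAt).prodMk hΦd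
  set J : Ed d →L[ℝ] ℝ × (Ed d × Ed d) :=
    ((0 : Ed d →L[ℝ] ℝ)).prod (((0 : Ed d →L[ℝ] Ed d)).prod (ContinuousLinearMap.id ℝ (Ed d)))
    with hJ
  have hι : HasFDerivAt (fun p' : Ed d => ((z₀.1, (z₀.2.1, p')) : ℝ × (Ed d × Ed d))) J z₀.2.2 :=
    (hasFDerivAt_const z₀.1 _).prodMk ((hasFDerivAt_const z₀.2.1 _).prodMk (hasFDerivAt_id _))
  have hBJ : DΦ.comp J = B := by
    have h1 : HasFDerivAt (fun p' => Φ (z₀.1, (z₀.2.1, p'))) (DΦ.comp J) z₀.2.2 :=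
      hΦd.comp z₀.2.2 (by simpa using hι)
    exact h1.unique hB
  have hTinj : Function.Injective T := by
    rw [injective_iff_map_eq_zero]
    intro x hx
    have h1 : Pmap x = 0 := congrArg Prod.fst hx
    have h2 : DΦ x = 0 := congrArg Prod.snd hx
    have hx1 : x.1 = 0 := congrArg Prod.fst h1
    have hx21 : x.2.1 = 0 := congrArg Prod.snd h1
    have hxJ : x = J x.2.2 := by
      show x = ((0 : ℝ), ((0 : Ed d), x.2.2))
      rw [← hx1, ← hx21]
    have h3 : B x.2.2 = 0 := by rw [← hBJ]; rw [hxJ] at h2; exact h2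
    set e := LinearMap.equivOfDetNeZero ((B : Ed d →L[ℝ] Ed d) : Ed d →ₗ[ℝ] Ed d) hdet with he
    have hE : (e : Ed d →ₗ[ℝ] Ed d) = ((B : Ed d →L[ℝ] Ed d) : Ed d →ₗ[ℝ] Ed d) :=
      LinearEquiv.coe_ofIsUnitDet _
    have h4 : x.2.2 = 0 := by
      apply e.injective
      have h5 : e x.2.2 = B x.2.2 := DFunLike.congr_fun hE x.2.2
      rw [h5, h3, map_zero]
    rw [hxJ, h4]; simp
  have hrank : Module.finrank ℝ (ℝ × (Ed d × Ed d)) = Module.finrank ℝ ((ℝ × Ed d) × Ed d) := by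
    simp [Module.finrank_prod]; ring
  set e2 : (ℝ × (Ed d × Ed d)) ≃ₗ[ℝ] (ℝ × Ed d) × Ed d :=
    LinearMap.linearEquivOfInjective (T : (ℝ × (Ed d × Ed d)) →ₗ[ℝ] (ℝ × Ed d) × Ed d)
      hTinj hrank with he2
  set eL : (ℝ × (Ed d × Ed d)) ≃L[ℝ] (ℝ × Ed d) × Ed d := e2.toContinuousLinearEquiv with heL
  have hcoe : (eL : (ℝ × (Ed d × Ed d)) →L[ℝ] (ℝ × Ed d) × Ed d) = T := by
    refine ContinuousLinearMap.ext fun x => ?_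
    show e2 x = T x
    rw [he2, LinearMap.linearEquivOfInjective_apply]
    rfl
  have hTd' : HasFDerivAt Θ ((eL : (ℝ × (Ed d × Ed d)) →L[ℝ] (ℝ × Ed d) × Ed d)) z₀ := by
    rw [hcoe]; exact hTd
  set P := hΘ.contDiffAt.toOpenPartialHomeomorph Θ hTd' one_ne_zero with hP
  have hsource : z₀ ∈ P.source := hΘ.contDiffAt.mem_toOpenPartialHomeomorph_source hTd' one_ne_zero
  have hPcoe : (P : ℝ × (Ed d × Ed d) → (ℝ × Ed d) × Ed d) = Θ := rfl
  have hΘz₀ : Θ z₀ = ((z₀.1, z₀.2.1), c) := by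
    show ((z₀.1, z₀.2.1), Φ z₀) = _
    rw [hc]
  have htarget : ((z₀.1, z₀.2.1), c) ∈ P.target := by
    have := hΘ.contDiffAt.image_mem_toOpenPartialHomeomorph_target hTd' one_ne_zero
    rwa [hΘz₀] at this
  set σ : ℝ × Ed d → Ed d := fun y => (P.symm (y, c)).2.2 with hσ
  have hsymm_cd : ContDiffAt ℝ 1 P.symm (Θ z₀) :=
    hΘ.contDiffAt.to_localInverse hTd' one_ne_zero
  refine ⟨σ, ?_⟩
  obtain ⟨r, hr, hball⟩ := Metric.isOpen_iff.1 P.open_source z₀ hsource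
  refine ⟨r, hr, ?_, ?_, ?_, ?_⟩
  · have h1 : ContDiffAt ℝ 1 (fun y : ℝ × Ed d => ((y, c) : (ℝ × Ed d) × Ed d)) (z₀.1, z₀.2.1) :=
      (contDiff_id.prodMk contDiff_const).contDiffAt
    have h2 : ContDiffAt ℝ 1 P.symm (((z₀.1, z₀.2.1), c) : (ℝ × Ed d) × Ed d) := by
      rwa [hΘz₀] at hsymm_cd
    have hA : ContDiffAt ℝ 1 (fun y : ℝ × Ed d => P.symm (y, c)) (z₀.1, z₀.2.1) :=
      ContDiffAt.comp (z₀.1, z₀.2.1) h2 h1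
    have h3 : ContDiffAt ℝ 1 (fun z : ℝ × (Ed d × Ed d) => z.2.2)
        ((fun y : ℝ × Ed d => P.symm (y, c)) (z₀.1, z₀.2.1)) :=
      (contDiff_snd.snd).contDiffAt
    exact ContDiffAt.comp (g := fun z : ℝ × (Ed d × Ed d) => z.2.2)
      (f := fun y : ℝ × Ed d => P.symm (y, c)) (z₀.1, z₀.2.1) h3 hA
  · show (P.symm ((z₀.1, z₀.2.1), c)).2.2 = z₀.2.2
    rw [← hΘz₀]
    have hli : P.symm (Θ z₀) = z₀ := P.left_inv hsource
    rw [hli]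
  · have hcont : ContinuousAt (fun y : ℝ × Ed d => (((y, c)) : (ℝ × Ed d) × Ed d))
        (z₀.1, z₀.2.1) := (continuous_id.prodMk continuous_const).continuousAt
    have hmem : ∀ᶠ y in 𝓝 (z₀.1, z₀.2.1),
        (((y, c)) : (ℝ × Ed d) × Ed d) ∈ P.target :=
      hcont.eventually_mem (P.open_target.mem_nhds htarget)
    filter_upwards [hmem] with y hy
    have h1 : Θ (P.symm (y, c)) = (y, c) := P.right_inv hy
    have h11 : ((P.symm (y, c)).1, (P.symm (y, c)).2.1) = y := congrArg Prod.fst h1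
    have h12 : Φ (P.symm (y, c)) = c := congrArg Prod.snd h1
    have hz : ((y.1, (y.2, σ y)) : ℝ × (Ed d × Ed d)) = P.symm (y, c) := by
      have e1 : (P.symm (y, c)).1 = y.1 := congrArg Prod.fst h11
      have e2' : (P.symm (y, c)).2.1 = y.2 := congrArg Prod.snd h11
      show ((y.1, (y.2, (P.symm (y, c)).2.2)) : ℝ × (Ed d × Ed d)) = _
      rw [← e1, ← e2']
    rw [hz, h12]
  · intro z z' hz hz' h1 h2 h3
    apply P.injOn (hball hz) (hball hz')
    show Θ z = Θ z'
    rw [hΘdef]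
    simp only [Prod.mk.injEq]
    exact ⟨⟨h1, h2⟩, h3⟩

lemma lift_iterate {F : Ed d × Ed d → Ed d × Ed d} (hF : IsZdLift F) (n : ℕ)
    (k : Fin d → ℤ) (q p : Ed d) :
    F^[n] (q + intVec d k, p) = ((F^[n] (q, p)).1 + intVec d k, (F^[n] (q, p)).2) := by
  induction n with
  | zero => simp
  | succ j ih =>
      rw [Function.iterate_succ_apply', Function.iterate_succ_apply', ih]
      have h1 := hF k (F^[j] (q, p)).1 (F^[j] (q, p)).2
      rw [← h1]

def cube (d : ℕ) : Set (Ed d) := {q : Ed d | ∀ i, q i ∈ Set.Icc (0 : ℝ) 1}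

lemma cube_compact : IsCompact (cube d) := by
  have hclosed : IsClosed (cube d) := by
    have h1 : cube d = ⋂ i, (fun q : Ed d => q i) ⁻¹' (Set.Icc (0:ℝ) 1) := by
      ext q; simp [cube]
    rw [h1]
    exact isClosed_iInter fun i =>
      IsClosed.preimage (EuclideanSpace.proj i).continuous isClosed_Icc
  have hsub : cube d ⊆ Metric.closedBall 0 (Real.sqrt d) := by
    intro q hq
    rw [Metric.mem_closedBall, dist_zero_right, EuclideanSpace.norm_eq]
    apply Real.sqrt_le_sqrt
    calc ∑ i, ‖q i‖ ^ 2 ≤ ∑ _i : Fin d, 1 := by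
          apply Finset.sum_le_sum
          intro i _
          have h1 := (hq i).1
          have h2 := (hq i).2
          have h3 : ‖q i‖ ≤ 1 := by rw [Real.norm_eq_abs, abs_le]; constructor <;> linarith
          nlinarith [norm_nonneg (q i)]
      _ = (d : ℝ) := by simp
  exact (isCompact_closedBall _ _).of_isClosed_subset hclosed hsub

lemma cube_nonempty : (0 : Ed d) ∈ cube d := by
  intro i
  simp [Set.mem_Icc]

lemma exists_frac (q : Ed d) : ∃ k : Fin d → ℤ, q - intVec d k ∈ cube d := by
  refine ⟨fun i => ⌊q i⌋, fun i => ?_⟩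
  have h1 : (q - intVec d (fun i => ⌊q i⌋)) i = q i - ⌊q i⌋ := by simp [intVec]
  rw [h1]
  constructor
  · linarith [Int.floor_le (q i)]
  · linarith [Int.lt_floor_add_one (q i)]

end Statement5Aux

set_option maxHeartbeats 2000000 in
open Statement5Aux in
/-- Lemma 2.7 item (ii). For a strongly positive symplectic twist map
`f` with generating function `S`, `G ∈ C²(𝕋^d)` and the continuous family of lifts
`(F_ε)` of the twist maps generated by `S + εG`, for coprime `(m, n)` the set
`J*_{(m,n)}` of parameters `ε` admitting a Lipschitz `ℤ^d`-periodic graph contained in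
the set of radially transformed points at which `F_ε^n` is a local twist is open. -/
theorem statement5 (d : ℕ) (F : Ed d × Ed d → Ed d × Ed d) (S : Ed d × Ed d → ℝ)
    (G : Ed d → ℝ) (hGreg : ContDiff ℝ 2 G) (hGper : ZdPeriodicFun G)
    (Fε : ℝ → Ed d × Ed d → Ed d × Ed d)
    (hFS : IsSymplecticTwistLift F S)
    (hfam : ∀ ε : ℝ, IsSymplecticTwistLift (Fε ε) fun x => S x + ε * G x.1)
    (hcont : Continuous fun x : ℝ × (Ed d × Ed d) => Fε x.1 x.2)
    (hpos : StronglyPositiveGenFun S)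
    (m : Fin d → ℤ) (n : ℕ) (hn : 0 < n) (hmn : CoprimeVec m n) :
    IsOpen {ε : ℝ | ∃ γ : Ed d → Ed d, (∃ K : NNReal, LipschitzWith K γ) ∧
      ZdPeriodic γ ∧ ∀ q : Ed d,
        ((Fε ε)^[n] (q, γ q)).1 = q + intVec d m ∧ twistDet (Fε ε) n q (γ q) ≠ 0} := by
  classical
  rw [Metric.isOpen_iff]
  rintro ε₀ ⟨γ₀, ⟨K₀, hK₀⟩, hper₀, hsol₀⟩
  set m' : Ed d := intVec d m with hm'
  set g : Ed d → Ed d := gradOf G with hgdef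
  have hg : ContDiff ℝ 1 g := gradOf_contDiff hGreg
  have hF1 : ContDiff ℝ 1 F := hFS.diffeo.1
  have hFe : ∀ ε q p, Fε ε (q, p) = F (q, p + ε • g q) := fun ε q p =>
    Feps_eq hGreg hpos hFS.genfun ε (hfam ε).genfun q p
  set Φ : ℝ × (Ed d × Ed d) → Ed d := fun z => (((Hm F g)^[n]) z).2.1 - z.2.1 with hΦdef
  have hΦc : ContDiff ℝ 1 Φ :=
    ((contDiff_snd.fst).comp (iter_contDiff (Hm_contDiff hF1 hg) n)).sub (contDiff_snd.fst)
  have Φ_eq : ∀ (ε : ℝ) (q p : Ed d), Φ (ε, (q, p)) = ((Fε ε)^[n] (q, p)).1 - q := by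
    intro ε q p
    show (((Hm F g)^[n]) (ε, (q, p))).2.1 - q = _
    rw [Hm_iter_eq hFe n ε (q, p)]
  have Φ_per : ∀ (ε : ℝ) (q p : Ed d) (k : Fin d → ℤ),
      Φ (ε, (q + intVec d k, p)) = Φ (ε, (q, p)) := by
    intro ε q p k
    rw [Φ_eq, Φ_eq, lift_iterate (hfam ε).lift n k q p]
    exact add_sub_add_right_eq_sub _ _ _
  set Bm : ℝ × (Ed d × Ed d) → Ed d →L[ℝ] Ed d := Bmap F g n with hBmdef
  have hBu : ∀ z : ℝ × (Ed d × Ed d),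
      HasFDerivAt (fun p' => (((Hm F g)^[n]) (z.1, (z.2.1, p'))).2.1) (Bm z) z.2.2 :=
    fun z => Bmap_hasFDeriv hF1 hg n z
  have hBΦ : ∀ z : ℝ × (Ed d × Ed d),
      HasFDerivAt (fun p' => Φ (z.1, (z.2.1, p'))) (Bm z) z.2.2 := by
    intro z
    exact (hBu z).sub_const z.2.1
  have td_eq : ∀ z : ℝ × (Ed d × Ed d), twistDet (Fε z.1) n z.2.1 z.2.2
      = LinearMap.det ((Bm z : Ed d →L[ℝ] Ed d) : Ed d →ₗ[ℝ] Ed d) := by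
    intro z
    have hfun : (fun p' => (((Fε z.1)^[n]) (z.2.1, p')).1)
        = (fun p' => (((Hm F g)^[n]) (z.1, (z.2.1, p'))).2.1) := by
      funext p'
      rw [Hm_iter_eq hFe n z.1 (z.2.1, p')]
    rw [twistDet, hfun, (hBu z).fderiv]
  have td_cont : Continuous fun z : ℝ × (Ed d × Ed d) =>
      LinearMap.det ((Bm z : Ed d →L[ℝ] Ed d) : Ed d →ₗ[ℝ] Ed d) := Bmap_cont hF1 hg n
  have twistDet_per : ∀ (ε : ℝ) (q p : Ed d) (k : Fin d → ℤ),
      twistDet (Fε ε) n (q + intVec d k) p = twistDet (Fε ε) n q p := by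
    intro ε q p k
    have hfun : (fun p' => (((Fε ε)^[n]) (q + intVec d k, p')).1)
        = (fun p' => (((Fε ε)^[n]) (q, p')).1 + intVec d k) := by
      funext p'
      rw [lift_iterate (hfam ε).lift n k q p']
    rw [twistDet, twistDet, hfun, fderiv_add_const]
  have hγ₀c : Continuous γ₀ := hK₀.continuous
  have Φ₀ : ∀ q, Φ (ε₀, (q, γ₀ q)) = m' := by
    intro q
    rw [Φ_eq, (hsol₀ q).1, add_sub_cancel_left]
  have hdet₀ : ∀ q, LinearMap.det
      ((Bm (ε₀, (q, γ₀ q)) : Ed d →L[ℝ] Ed d) : Ed d →ₗ[ℝ] Ed d) ≠ 0 := by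
    intro q
    have h1 := (hsol₀ q).2
    rwa [td_eq (ε₀, (q, γ₀ q))] at h1
  -- local solving data at every point of the unperturbed graph over the cube
  have main : ∀ a : Ed d, a ∈ cube d →
      ∃ (σ : ℝ × Ed d → Ed d) (r : ℝ), 0 < r ∧ ContDiffAt ℝ 1 σ (ε₀, a) ∧
      σ (ε₀, a) = γ₀ a ∧
      (∀ᶠ y in 𝓝 (ε₀, a), Φ (y.1, (y.2, σ y)) = m') ∧
      (∀ z z' : ℝ × (Ed d × Ed d), z ∈ Metric.ball (ε₀, (a, γ₀ a)) r →
        z' ∈ Metric.ball (ε₀, (a, γ₀ a)) r →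
        z.1 = z'.1 → z.2.1 = z'.2.1 → Φ z = Φ z' → z = z') := by
    intro a _
    exact solve_local hΦc (hBΦ (ε₀, (a, γ₀ a))) (hdet₀ a) m' (Φ₀ a)
  choose σf rf hrf hσcd hσval hσsolve huniq using main
  set Kr : ℝ := (K₀ : ℝ) with hKr
  have hKr0 : 0 ≤ Kr := K₀.coe_nonneg
  -- uniqueness radius: finite subcover
  set sfun : ∀ a ∈ cube d, ℝ := fun a ha => rf a ha / (2 * (Kr + 2)) with hsfun
  have hsfun_pos : ∀ a (ha : a ∈ cube d), 0 < sfun a ha := fun a ha => by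
    have := hrf a ha
    positivity
  obtain ⟨tU, htU⟩ := cube_compact.elim_nhds_subcover'
    (fun a ha => Metric.ball a (sfun a ha))
    (fun a ha => Metric.ball_mem_nhds a (hsfun_pos a ha))
  have htUne : tU.Nonempty := by
    rcases Set.mem_iUnion₂.1 (htU cube_nonempty) with ⟨a, hat, _⟩
    exact ⟨a, hat⟩
  set ρU : ℝ := tU.inf' htUne (fun a => sfun a a.2) with hρU
  have hρU_pos : 0 < ρU := by
    rw [hρU, Finset.lt_inf'_iff]
    exact fun a _ => hsfun_pos a a.2
  have hρU_le : ∀ a ∈ tU, ρU ≤ sfun a a.2 := fun a ha => Finset.inf'_le _ ha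
  have hUniqCube : ∀ (ε : ℝ) (q p p' : Ed d), |ε - ε₀| ≤ ρU → q ∈ cube d →
      ‖p - γ₀ q‖ ≤ ρU → ‖p' - γ₀ q‖ ≤ ρU →
      Φ (ε, (q, p)) = m' → Φ (ε, (q, p')) = m' → p = p' := by
    intro ε q p p' hε hq hp hp' hΦp hΦp'
    rcases Set.mem_iUnion₂.1 (htU hq) with ⟨a, hat, hqa⟩
    have hs := hρU_le a hat
    set r : ℝ := rf a a.2 with hr
    set s : ℝ := sfun a a.2 with hs2
    have hr0 : 0 < r := hrf a a.2
    have hs0 : 0 < s := hsfun_pos a a.2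
    have hsr : s * (2 * (Kr + 2)) = r := by
      rw [hs2, hsfun]
      field_simp
      exact hr.symm
    have hqa' : dist q (a : Ed d) < s := Metric.mem_ball.1 hqa
    have hsltr : s < r := by nlinarith
    have hdistp : ∀ x : Ed d, ‖x - γ₀ q‖ ≤ ρU → dist x (γ₀ (a : Ed d)) < r := by
      intro x hx
      have h1 : dist x (γ₀ q) ≤ ρU := by rw [dist_eq_norm]; exact hx
      have h2 : dist (γ₀ q) (γ₀ (a : Ed d)) ≤ Kr * dist q (a : Ed d) := hK₀.dist_le_mul q a
      have h3 : dist x (γ₀ (a : Ed d)) ≤ ρU + Kr * dist q (a : Ed d) :=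
        le_trans (dist_triangle _ _ _) (by linarith)
      have h4 : Kr * dist q (a : Ed d) ≤ Kr * s := by
        apply mul_le_mul_of_nonneg_left (le_of_lt hqa') hKr0
      nlinarith
    have hball : ∀ x : Ed d, ‖x - γ₀ q‖ ≤ ρU →
        ((ε, (q, x)) : ℝ × (Ed d × Ed d)) ∈ Metric.ball (ε₀, ((a : Ed d), γ₀ (a : Ed d))) r := by
      intro x hx
      rw [Metric.mem_ball, Prod.dist_eq, Prod.dist_eq]
      have h1 : dist ε ε₀ < r := lt_of_le_of_lt (by rwa [Real.dist_eq]) (lt_of_le_of_lt hs hsltr)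
      have h2 : dist q (a : Ed d) < r := lt_trans hqa' hsltr
      have h3 : dist x (γ₀ (a : Ed d)) < r := hdistp x hx
      exact max_lt h1 (max_lt h2 h3)
    have := huniq a a.2 (ε, (q, p)) (ε, (q, p')) (hball p hp) (hball p' hp') rfl rfl
      (by rw [hΦp, hΦp'])
    have h5 : ((ε, (q, p)) : ℝ × (Ed d × Ed d)).2.2
        = ((ε, (q, p')) : ℝ × (Ed d × Ed d)).2.2 := by rw [this]
    exact h5
  have hUniq : ∀ (ε : ℝ) (q p p' : Ed d), |ε - ε₀| ≤ ρU →
      ‖p - γ₀ q‖ ≤ ρU → ‖p' - γ₀ q‖ ≤ ρU →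
      Φ (ε, (q, p)) = m' → Φ (ε, (q, p')) = m' → p = p' := by
    intro ε q p p' hε hp hp' hΦp hΦp'
    obtain ⟨k, hk⟩ := exists_frac q
    have hq' : q = (q - intVec d k) + intVec d k := by abel
    have hγ : γ₀ (q - intVec d k) = γ₀ q := by
      conv_rhs => rw [hq']
      rw [hper₀ k (q - intVec d k)]
    refine hUniqCube ε (q - intVec d k) p p' hε hk ?_ ?_ ?_ ?_
    · rwa [hγ]
    · rwa [hγ]
    · rw [← Φ_per ε (q - intVec d k) p k, ← hq']; exact hΦp
    · rw [← Φ_per ε (q - intVec d k) p' k, ← hq']; exact hΦp'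
  -- determinant tube
  have hOdet : IsOpen {z : ℝ × (Ed d × Ed d) |
      LinearMap.det ((Bm z : Ed d →L[ℝ] Ed d) : Ed d →ₗ[ℝ] Ed d) ≠ 0} :=
    isOpen_ne.preimage td_cont
  set emap : ℝ × (Ed d × Ed d) → ℝ × (Ed d × Ed d) :=
    fun w => (w.1, (w.2.1, γ₀ w.2.1 + w.2.2)) with hemap
  have hemapc : Continuous emap :=
    continuous_fst.prodMk (continuous_snd.fst.prodMk
      ((hγ₀c.comp continuous_snd.fst).add continuous_snd.snd))
  set O' : Set (ℝ × (Ed d × Ed d)) := emap ⁻¹' {z |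
      LinearMap.det ((Bm z : Ed d →L[ℝ] Ed d) : Ed d →ₗ[ℝ] Ed d) ≠ 0} with hO'
  have hO'open : IsOpen O' := hOdet.preimage hemapc
  set Kc : Set (ℝ × (Ed d × Ed d)) :=
    (fun a : Ed d => ((ε₀ : ℝ), (a, (0 : Ed d)))) '' cube d with hKc
  have hKcc : IsCompact Kc := cube_compact.image
    (continuous_const.prodMk (continuous_id.prodMk continuous_const))
  have hKcO' : Kc ⊆ O' := by
    rintro w ⟨a, ha, rfl⟩
    show LinearMap.det ((Bm (emap (ε₀, (a, 0))) : Ed d →L[ℝ] Ed d) : Ed d →ₗ[ℝ] Ed d) ≠ 0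
    have h1 : emap (ε₀, (a, 0)) = (ε₀, (a, γ₀ a)) := by
      show ((ε₀ : ℝ), (a, γ₀ a + 0)) = _
      rw [add_zero]
    rw [h1]
    exact hdet₀ a
  obtain ⟨δD, hδD, hthick⟩ := hKcc.exists_thickening_subset_open hO'open hKcO'
  have hdetCube : ∀ (ε : ℝ) (q p : Ed d), |ε - ε₀| < δD → q ∈ cube d →
      ‖p - γ₀ q‖ < δD → twistDet (Fε ε) n q p ≠ 0 := by
    intro ε q p hε hq hp
    have hw : ((ε, (q, p - γ₀ q)) : ℝ × (Ed d × Ed d)) ∈ Metric.thickening δD Kc := by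
      rw [Metric.mem_thickening_iff]
      refine ⟨(ε₀, (q, 0)), ⟨q, hq, rfl⟩, ?_⟩
      rw [Prod.dist_eq, Prod.dist_eq, dist_self]
      have h1 : dist ε ε₀ < δD := by rwa [Real.dist_eq]
      have h2 : dist (p - γ₀ q) (0 : Ed d) < δD := by rwa [dist_zero_right]
      exact max_lt h1 (max_lt hδD h2)
    have h3 := hthick hw
    have h4 : emap (ε, (q, p - γ₀ q)) = (ε, (q, p)) := by
      show ((ε : ℝ), (q, γ₀ q + (p - γ₀ q))) = _
      rw [add_sub_cancel]
    have h5 : LinearMap.det ((Bm (ε, (q, p)) : Ed d →L[ℝ] Ed d) : Ed d →ₗ[ℝ] Ed d) ≠ 0 := by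
      have h6 := h3
      rw [hO', Set.mem_preimage, h4] at h6
      exact h6
    rw [td_eq (ε, (q, p))]
    exact h5
  have hdetAll : ∀ (ε : ℝ) (q p : Ed d), |ε - ε₀| < δD →
      ‖p - γ₀ q‖ < δD → twistDet (Fε ε) n q p ≠ 0 := by
    intro ε q p hε hp
    obtain ⟨k, hk⟩ := exists_frac q
    have hq' : q = (q - intVec d k) + intVec d k := by abel
    have hγ : γ₀ (q - intVec d k) = γ₀ q := by
      conv_rhs => rw [hq']
      rw [hper₀ k (q - intVec d k)]
    have h1 : twistDet (Fε ε) n q p = twistDet (Fε ε) n (q - intVec d k) p := by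
      conv_lhs => rw [hq']
      rw [twistDet_per ε (q - intVec d k) p k]
    rw [h1]
    exact hdetCube ε (q - intVec d k) p hε hk (by rwa [hγ])
  -- the tube radius
  set ρ : ℝ := min ρU δD / 2 with hρ
  have hρ_pos : 0 < ρ := by
    rw [hρ]
    have := lt_min hρU_pos hδD
    positivity
  have hρ_leU : ρ ≤ ρU := by
    rw [hρ]
    have h1 : min ρU δD ≤ ρU := min_le_left _ _
    linarith [min_le_left ρU δD, hρU_pos.le]
  have hρ_ltD : ρ < δD := by
    rw [hρ]
    have h1 : min ρU δD ≤ δD := min_le_right _ _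
    linarith
  -- existence radius: finite subcover
  have hEloc : ∀ a (ha : a ∈ cube d), ∃ t > 0, ∀ y : ℝ × Ed d, dist y (ε₀, a) < t →
      ‖σf a ha y - γ₀ y.2‖ < ρ ∧ Φ (y.1, (y.2, σf a ha y)) = m' := by
    intro a ha
    have hσc : ContinuousAt (σf a ha) (ε₀, a) := (hσcd a ha).continuousAt
    have hnc : ContinuousAt (fun y : ℝ × Ed d => ‖σf a ha y - γ₀ y.2‖) (ε₀, a) :=
      (hσc.sub ((hγ₀c.comp continuous_snd).continuousAt)).norm
    have hval0 : ‖σf a ha (ε₀, a) - γ₀ ((ε₀, a) : ℝ × Ed d).2‖ < ρ := by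
      rw [hσval a ha]
      simpa using hρ_pos
    have hev1 : ∀ᶠ y in 𝓝 ((ε₀ : ℝ), a), ‖σf a ha y - γ₀ y.2‖ < ρ :=
      hnc.eventually_lt_const hval0
    have hev := hev1.and (hσsolve a ha)
    rw [Metric.eventually_nhds_iff] at hev
    obtain ⟨t, ht, hball⟩ := hev
    exact ⟨t, ht, fun y hy => hball hy⟩
  choose tE htE htEball using hEloc
  obtain ⟨tV, htV⟩ := cube_compact.elim_nhds_subcover'
    (fun a ha => Metric.ball a (tE a ha))
    (fun a ha => Metric.ball_mem_nhds a (htE a ha))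
  have htVne : tV.Nonempty := by
    rcases Set.mem_iUnion₂.1 (htV cube_nonempty) with ⟨a, hat, _⟩
    exact ⟨a, hat⟩
  set δE : ℝ := tV.inf' htVne (fun a => tE a a.2) with hδE
  have hδE_pos : 0 < δE := by
    rw [hδE, Finset.lt_inf'_iff]
    exact fun a _ => htE a a.2
  have hEcube : ∀ (ε : ℝ) (q : Ed d), |ε - ε₀| < δE → q ∈ cube d →
      ∃ p, ‖p - γ₀ q‖ < ρ ∧ Φ (ε, (q, p)) = m' := by
    intro ε q hε hq
    rcases Set.mem_iUnion₂.1 (htV hq) with ⟨a, hat, hqa⟩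
    have h1 : dist ((ε, q) : ℝ × Ed d) ((ε₀ : ℝ), (a : Ed d)) < tE a a.2 := by
      rw [Prod.dist_eq]
      refine max_lt ?_ (Metric.mem_ball.1 hqa)
      calc dist ε ε₀ = |ε - ε₀| := Real.dist_eq ε ε₀
        _ < δE := hε
        _ ≤ tE a a.2 := Finset.inf'_le _ hat
    obtain ⟨h2, h3⟩ := htEball a a.2 (ε, q) h1
    exact ⟨σf a a.2 (ε, q), h2, h3⟩
  have hE : ∀ (ε : ℝ) (q : Ed d), |ε - ε₀| < δE →
      ∃ p, ‖p - γ₀ q‖ < ρ ∧ Φ (ε, (q, p)) = m' := by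
    intro ε q hε
    obtain ⟨k, hk⟩ := exists_frac q
    have hq' : q = (q - intVec d k) + intVec d k := by abel
    have hγ : γ₀ (q - intVec d k) = γ₀ q := by
      conv_rhs => rw [hq']
      rw [hper₀ k (q - intVec d k)]
    obtain ⟨p, hp1, hp2⟩ := hEcube ε (q - intVec d k) hε hk
    refine ⟨p, by rwa [hγ] at hp1, ?_⟩
    conv_lhs => rw [hq']
    rw [Φ_per ε (q - intVec d k) p k]
    exact hp2
  -- the final radius
  set δ : ℝ := min δE ρ with hδ
  have hδ_pos : 0 < δ := lt_min hδE_pos hρ_pos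
  refine ⟨δ, hδ_pos, ?_⟩
  intro ε hε
  rw [Metric.mem_ball, Real.dist_eq] at hε
  have hεE : |ε - ε₀| < δE := lt_of_lt_of_le hε (min_le_left _ _)
  have hερ : |ε - ε₀| < ρ := lt_of_lt_of_le hε (min_le_right _ _)
  have hεU : |ε - ε₀| ≤ ρU := le_trans hερ.le hρ_leU
  have hεD : |ε - ε₀| < δD := lt_trans hερ hρ_ltD
  have EX : ∀ q : Ed d, ∃ p, ‖p - γ₀ q‖ < ρ ∧ Φ (ε, (q, p)) = m' := fun q => hE ε q hεE
  set γ : Ed d → Ed d := fun q => (EX q).choose with hγdef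
  have hγ1 : ∀ q, ‖γ q - γ₀ q‖ < ρ := fun q => (EX q).choose_spec.1
  have hγ2 : ∀ q, Φ (ε, (q, γ q)) = m' := fun q => (EX q).choose_spec.2
  have hUniq' : ∀ (q p p' : Ed d), ‖p - γ₀ q‖ < ρ → ‖p' - γ₀ q‖ < ρ →
      Φ (ε, (q, p)) = m' → Φ (ε, (q, p')) = m' → p = p' := fun q p p' h1 h2 h3 h4 =>
    hUniq ε q p p' hεU (le_trans h1.le hρ_leU) (le_trans h2.le hρ_leU) h3 h4
  have hper : ZdPeriodic γ := by
    intro k q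
    apply hUniq' (q + intVec d k)
    · exact hγ1 (q + intVec d k)
    · rw [hper₀ k q]; exact hγ1 q
    · exact hγ2 (q + intVec d k)
    · rw [Φ_per ε q (γ q) k]; exact hγ2 q
  have hgraph : ∀ q : Ed d, ((Fε ε)^[n] (q, γ q)).1 = q + m' := by
    intro q
    have h1 := hγ2 q
    rw [Φ_eq] at h1
    have h2 := sub_eq_iff_eq_add.1 h1
    rw [h2, add_comm]
  have hdet : ∀ q : Ed d, twistDet (Fε ε) n q (γ q) ≠ 0 := fun q =>
    hdetAll ε q (γ q) hεD (lt_trans (hγ1 q) hρ_ltD)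
  -- Lipschitz continuity of γ
  have hC1 : ∀ qb : Ed d, ContDiffAt ℝ 1 γ qb := by
    intro qb
    have hdetz : LinearMap.det
        ((Bm (ε, (qb, γ qb)) : Ed d →L[ℝ] Ed d) : Ed d →ₗ[ℝ] Ed d) ≠ 0 := by
      have h1 := hdet qb
      rwa [td_eq (ε, (qb, γ qb))] at h1
    obtain ⟨σ, r, hr, hcd, hval, hsolve, _⟩ :=
      solve_local hΦc (hBΦ (ε, (qb, γ qb))) hdetz m' (hγ2 qb)
    have hσc : ContinuousAt σ (ε, qb) := hcd.continuousAt
    have hnc : ContinuousAt (fun y : ℝ × Ed d => ‖σ y - γ₀ y.2‖) (ε, qb) :=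
      (hσc.sub ((hγ₀c.comp continuous_snd).continuousAt)).norm
    have hval0 : ‖σ ((ε, qb) : ℝ × Ed d) - γ₀ (((ε, qb) : ℝ × Ed d)).2‖ < ρ := by
      rw [hval]
      exact hγ1 qb
    have hev1 : ∀ᶠ y in 𝓝 ((ε : ℝ), qb), ‖σ y - γ₀ y.2‖ < ρ := hnc.eventually_lt_const hval0
    have hev := hev1.and hsolve
    have hlc : ContinuousAt (fun q : Ed d => ((ε, q) : ℝ × Ed d)) qb :=
      (continuous_const.prodMk continuous_id).continuousAt
    have hevq : ∀ᶠ q in 𝓝 qb, ‖σ (ε, q) - γ₀ q‖ < ρ ∧ Φ (ε, (q, σ (ε, q))) = m' :=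
      hlc.tendsto.eventually hev
    have heq : γ =ᶠ[𝓝 qb] fun q => σ (ε, q) := by
      filter_upwards [hevq] with q hq
      exact hUniq' q (γ q) (σ (ε, q)) (hγ1 q) hq.1 (hγ2 q) hq.2
    have hσℓ : ContDiffAt ℝ 1 (fun q => σ (ε, q)) qb :=
      ContDiffAt.comp (g := σ) (f := fun q : Ed d => ((ε, q) : ℝ × Ed d)) qb hcd
        ((contDiff_const.prodMk contDiff_id).contDiffAt)
    exact hσℓ.congr_of_eventuallyEq heq
  have hγC1 : ContDiff ℝ 1 γ := contDiff_iff_contDiffAt.2 hC1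
  have hdiffγ : Differentiable ℝ γ := hγC1.differentiable one_ne_zero
  have hfconts : Continuous (fun q => fderiv ℝ γ q) := hγC1.continuous_fderiv one_ne_zero
  have hfper : ∀ (q : Ed d) (k : Fin d → ℤ), fderiv ℝ γ (q + intVec d k) = fderiv ℝ γ q := by
    intro q k
    have htr : HasFDerivAt (fun q' : Ed d => q' + intVec d k)
        (ContinuousLinearMap.id ℝ (Ed d)) q := (hasFDerivAt_id q).add_const _
    have h2 : HasFDerivAt (γ ∘ fun q' : Ed d => q' + intVec d k)
        ((fderiv ℝ γ (q + intVec d k)).comp (ContinuousLinearMap.id ℝ (Ed d))) q :=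
      (hdiffγ _).hasFDerivAt.comp q htr
    have h3 : (γ ∘ fun q' : Ed d => q' + intVec d k) = γ := funext fun q' => hper k q'
    rw [h3] at h2
    have h4 := h2.unique (hdiffγ q).hasFDerivAt
    rw [← h4, ContinuousLinearMap.comp_id]
  obtain ⟨qM, hqM, hmax⟩ := cube_compact.exists_isMaxOn ⟨0, cube_nonempty⟩
    ((hfconts.norm).continuousOn)
  have hmax' : ∀ x ∈ cube d, ‖fderiv ℝ γ x‖ ≤ ‖fderiv ℝ γ qM‖ := hmax
  have hboundAll : ∀ q : Ed d, ‖fderiv ℝ γ q‖₊ ≤ ‖fderiv ℝ γ qM‖₊ := by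
    intro q
    obtain ⟨k, hk⟩ := exists_frac q
    have hq' : q = (q - intVec d k) + intVec d k := by abel
    have h1 : fderiv ℝ γ q = fderiv ℝ γ (q - intVec d k) := by
      conv_lhs => rw [hq']
      exact hfper (q - intVec d k) k
    have h2 : ‖fderiv ℝ γ (q - intVec d k)‖ ≤ ‖fderiv ℝ γ qM‖ := hmax' _ hk
    rw [h1]
    exact_mod_cast h2
  have hlips : LipschitzWith (‖fderiv ℝ γ qM‖₊) γ :=
    lipschitzWith_of_nnnorm_fderiv_le hdiffγ hboundAll
  exact ⟨γ, ⟨_, hlips⟩, hper, fun q => ⟨hgraph q, hdet q⟩⟩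

end
end

section
/- Let f be a positive symplectic twist map of 𝕋^d×ℝ^d and let F be a lift of f. Then for every (m,n) ∈ ℤ^d×ℕ* and every q ∈ ℝ^d, there exists at most one p ∈ ℝ^d such that F^n(q,p) = (q+m,p) and the orbit of (q,p) under F is action-minimizing. -/
open Function Set Filter Topology MeasureTheory

noncomputable section

variable {d : ℕ}

/-! ### Auxiliary lemmas for Statement 15 -/

/-- The partial derivative of a slice `w ↦ S (w, Q)` in terms of the full derivative. -/
lemma aux_slice_fderiv (S : Ed d × Ed d → ℝ) (hS : ContDiff ℝ 2 S) (a Q v : Ed d) :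
    fderiv ℝ (fun w => S (w, Q)) a v = fderiv ℝ S (a, Q) (v, 0) := by
  have hL : HasFDerivAt (fun w : Ed d => (w, Q))
      ((ContinuousLinearMap.id ℝ (Ed d)).prod 0) a :=
    HasFDerivAt.prodMk (hasFDerivAt_id a) (hasFDerivAt_const Q a)
  have hC : HasFDerivAt (fun w : Ed d => S (w, Q))
      ((fderiv ℝ S (a, Q)).comp ((ContinuousLinearMap.id ℝ (Ed d)).prod 0)) a :=
    ((hS.differentiable (by norm_num) (a, Q)).hasFDerivAt).comp a hL
  rw [hC.fderiv]
  simp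

/-- Strict monotonicity of `Q ↦ ∂₁ S (a, Q)` from the negative-definite mixed second
derivative. -/
lemma aux_inj (S : Ed d × Ed d → ℝ) (hS : ContDiff ℝ 2 S) (α : ℝ) (hα : 0 < α)
    (hmix : ∀ q Q v : Ed d, mixedS S q Q v ≤ -α * ‖v‖ ^ 2) (a Q Q' : Ed d)
    (h : fderiv ℝ (fun w => S (w, Q)) a = fderiv ℝ (fun w => S (w, Q')) a) : Q = Q' := by
  by_contra hne
  set v := Q' - Q with hv
  have hvne : v ≠ 0 := sub_ne_zero.mpr fun h' => hne h'.symm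
  set Gh : Ed d → ℝ := fun Z => fderiv ℝ S (a, Z) ((v, 0)) with hGh
  have hGeq : (fun Z => fderiv ℝ (fun w => S (w, Z)) a v) = Gh :=
    funext fun Z => aux_slice_fderiv S hS a Z v
  have hGc : ContDiff ℝ 1 Gh := by
    have h1 : ContDiff ℝ 1 (fun Z : Ed d => fderiv ℝ S (a, Z)) :=
      (hS.fderiv_right (by norm_num)).comp (contDiff_const.prodMk contDiff_id)
    exact h1.clm_apply contDiff_const
  have hline : ∀ t : ℝ, HasDerivAt (fun s : ℝ => Q + s • v) v t := fun t => by
    simpa using (((hasDerivAt_id t).smul_const v).const_add Q)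
  have hg : ∀ t : ℝ, HasDerivAt (fun s : ℝ => Gh (Q + s • v))
      (fderiv ℝ Gh (Q + t • v) v) t := fun t =>
    by have h := ((hGc.differentiable one_ne_zero (Q + t • v)).hasFDerivAt).comp_hasDerivAt t (hline t); exact h
  have hneg : ∀ t : ℝ, deriv (fun s : ℝ => Gh (Q + s • v)) t < 0 := by
    intro t
    rw [(hg t).deriv]
    have hGm : fderiv ℝ Gh (Q + t • v) v = mixedS S a (Q + t • v) v := by
      rw [mixedS, hGeq]
    rw [hGm]
    have h1 := hmix a (Q + t • v) v
    have h2 : (0:ℝ) < ‖v‖ ^ 2 := by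
      have := norm_pos_iff.mpr hvne
      positivity
    nlinarith
  have hanti : StrictAnti (fun s : ℝ => Gh (Q + s • v)) := strictAnti_of_deriv_neg hneg
  have h10 : Gh (Q + (1:ℝ) • v) < Gh (Q + (0:ℝ) • v) := hanti zero_lt_one
  have e1 : Q + (1:ℝ) • v = Q' := by rw [one_smul, hv]; abel
  have e0 : Q + (0:ℝ) • v = Q := by rw [zero_smul, add_zero]
  rw [e1, e0] at h10
  have hq : Gh Q = fderiv ℝ (fun w => S (w, Q)) a v := (congrFun hGeq Q).symm
  have hq' : Gh Q' = fderiv ℝ (fun w => S (w, Q')) a v := (congrFun hGeq Q').symm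
  rw [hq, hq', ← h] at h10
  exact lt_irrefl _ h10

/-- Discrete Euler–Lagrange equation at a global minimum of the two-step action. -/
lemma aux_el (S : Ed d × Ed d → ℝ) (hS : ContDiff ℝ 2 S) (a b e : Ed d)
    (h : ∀ c : Ed d, S (a, b) + S (b, e) ≤ S (a, c) + S (c, e)) :
    fderiv ℝ (fun w => S (a, w)) b + fderiv ℝ (fun w => S (w, e)) b = 0 := by
  have hSd : Differentiable ℝ S := hS.differentiable (by norm_num)
  have hd1 : DifferentiableAt ℝ (fun w : Ed d => S (a, w)) b :=
    (hSd (a, b)).comp b ((differentiableAt_const a).prodMk differentiableAt_id)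
  have hd2 : DifferentiableAt ℝ (fun w : Ed d => S (w, e)) b :=
    (hSd (b, e)).comp b (differentiableAt_id.prodMk (differentiableAt_const e))
  have hloc : IsLocalMin (fun c : Ed d => S (a, c) + S (c, e)) b :=
    Filter.Eventually.of_forall h
  have h0 := hloc.fderiv_eq_zero
  rwa [fderiv_fun_add hd1 hd2] at h0

/-- From global minimality of a segment, local minimality with respect to varying an
interior point. -/
lemma aux_mod (S : Ed d × Ed d → ℝ) (y : ℕ → Ed d) (N i : ℕ) (hiN : i + 2 ≤ N)
    (hmin : ∀ w : ℕ → Ed d, w 0 = y 0 → w N = y N →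
      ∑ j ∈ Finset.range N, S (y j, y (j + 1)) ≤ ∑ j ∈ Finset.range N, S (w j, w (j + 1)))
    (c : Ed d) :
    S (y i, y (i + 1)) + S (y (i + 1), y (i + 2)) ≤ S (y i, c) + S (c, y (i + 2)) := by
  set w : ℕ → Ed d := fun j => if j = i + 1 then c else y j with hw
  have h0 : w 0 = y 0 := by simp only [hw]; exact if_neg (by omega)
  have hN : w N = y N := by simp only [hw]; exact if_neg (by omega)
  have hkey := hmin w h0 hN
  have hdiff : ∑ j ∈ Finset.range N, S (w j, w (j + 1))
      - ∑ j ∈ Finset.range N, S (y j, y (j + 1))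
      = (S (y i, c) + S (c, y (i + 2))) - (S (y i, y (i + 1)) + S (y (i + 1), y (i + 2))) := by
    rw [← Finset.sum_sub_distrib]
    have hsubset : ({i, i + 1} : Finset ℕ) ⊆ Finset.range N := by
      intro j hj
      simp only [Finset.mem_insert, Finset.mem_singleton] at hj
      exact Finset.mem_range.mpr (by omega)
    have hzero : ∀ j ∈ Finset.range N, j ∉ ({i, i + 1} : Finset ℕ) →
        S (w j, w (j + 1)) - S (y j, y (j + 1)) = 0 := by
      intro j _ hj
      simp only [Finset.mem_insert, Finset.mem_singleton, not_or] at hj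
      have e1 : w j = y j := by simp only [hw]; exact if_neg hj.2
      have e2 : w (j + 1) = y (j + 1) := by
        simp only [hw]; exact if_neg (by omega)
      rw [e1, e2, sub_self]
    rw [← Finset.sum_subset hsubset hzero, Finset.sum_pair (by omega : i ≠ i + 1)]
    have e1 : w i = y i := by simp only [hw]; exact if_neg (by omega)
    have e2 : w (i + 1) = c := by simp [hw]
    have e3 : w (i + 1 + 1) = y (i + 2) := by simp only [hw]; exact if_neg (by omega)
    rw [e1, e2, e3, show i + 1 + 1 = i + 2 by omega]
    ring
  linarith

/-- Extraction of the `ℕ`-indexed minimality property from `OrbitMinimizing`. -/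
lemma aux_orbit_nat (F : Ed d × Ed d → Ed d × Ed d) (S : Ed d × Ed d → ℝ)
    (a : Ed d × Ed d) (h : OrbitMinimizing F S a) :
    ∀ (N : ℕ) (w : ℕ → Ed d), w 0 = a.1 → w N = (F^[N] a).1 →
      ∑ j ∈ Finset.range N, S ((F^[j] a).1, (F^[j + 1] a).1)
        ≤ ∑ j ∈ Finset.range N, S (w j, w (j + 1)) := by
  obtain ⟨x, hx0, horb, hms⟩ := h
  have hx : ∀ j : ℕ, x (j : ℤ) = F^[j] a := by
    intro j
    induction j with
    | zero => simpa using hx0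
    | succ k ih =>
      have hs := horb (k : ℤ)
      rw [ih] at hs
      rw [show ((k + 1 : ℕ) : ℤ) = (k : ℤ) + 1 by push_cast; ring, hs,
        Function.iterate_succ_apply']
  intro N w h0 hN
  have h00 : x (0 : ℤ) = a := by simpa using hx 0
  have hms0 := hms 0 N w (by show w 0 = (x 0).1; rw [h0, h00])
    (by show w N = (x (0 + (N : ℤ))).1
        rw [hN, show (0 : ℤ) + (N : ℤ) = ((N : ℕ) : ℤ) by simp, hx N])
  simp only [zero_add] at hms0
  refine le_trans (le_of_eq ?_) hms0
  refine Finset.sum_congr rfl fun j _ => ?_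
  have hj1 : x ((j : ℤ) + 1) = F^[j + 1] a := by
    rw [show ((j : ℤ) + 1) = ((j + 1 : ℕ) : ℤ) by push_cast; ring, hx (j + 1)]
  rw [hx j, hj1]

/-- Iterates of a `ℤ^d`-lift commute with integer translations. -/
lemma aux_lift_iter (F : Ed d × Ed d → Ed d × Ed d) (hl : IsZdLift F) (m : Fin d → ℤ)
    (j : ℕ) (a : Ed d × Ed d) :
    F^[j] (a.1 + intVec d m, a.2) = ((F^[j] a).1 + intVec d m, (F^[j] a).2) := by
  induction j generalizing a with
  | zero => simp
  | succ k ih =>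
    rw [Function.iterate_succ_apply, Function.iterate_succ_apply]
    have h1 : F (a.1 + intVec d m, a.2) = ((F a).1 + intVec d m, (F a).2) := by
      have := hl m a.1 a.2
      simpa using this
    rw [h1]
    exact ih (F a)

/-- Core of the uniqueness argument: two minimizing configurations that agree at times
`0`, `nn+1` and `2(nn+1)` must agree at time `nn+2`. -/
lemma aux_main (S : Ed d × Ed d → ℝ) (hS : ContDiff ℝ 2 S) (α : ℝ) (hα : 0 < α)
    (hmix : ∀ q Q v : Ed d, mixedS S q Q v ≤ -α * ‖v‖ ^ 2)
    (u u' : ℕ → Ed d) (nn : ℕ)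
    (h0 : u 0 = u' 0) (hn : u (nn + 1) = u' (nn + 1))
    (hend : u (2 * (nn + 1)) = u' (2 * (nn + 1)))
    (hu : ∀ (N : ℕ) (w : ℕ → Ed d), w 0 = u 0 → w N = u N →
      ∑ j ∈ Finset.range N, S (u j, u (j + 1)) ≤ ∑ j ∈ Finset.range N, S (w j, w (j + 1)))
    (hu' : ∀ (N : ℕ) (w : ℕ → Ed d), w 0 = u' 0 → w N = u' N →
      ∑ j ∈ Finset.range N, S (u' j, u' (j + 1)) ≤
        ∑ j ∈ Finset.range N, S (w j, w (j + 1))) :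
    u (nn + 2) = u' (nn + 2) := by
  set g1 : ℕ → Ed d := fun j => if j ≤ nn + 1 then u j else u' j with hg1
  set g2 : ℕ → Ed d := fun j => if j ≤ nn + 1 then u' j else u j with hg2
  have hg10 : g1 0 = u 0 := by simp only [hg1]; exact if_pos (by omega)
  have hg20 : g2 0 = u' 0 := by simp only [hg2]; exact if_pos (by omega)
  have hg1N : g1 (2 * (nn + 1)) = u (2 * (nn + 1)) := by
    simp only [hg1]
    rw [if_neg (by omega)]
    exact hend.symm
  have hg2N : g2 (2 * (nn + 1)) = u' (2 * (nn + 1)) := by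
    simp only [hg2]
    rw [if_neg (by omega)]
    exact hend
  -- termwise identity: action(g1) + action(g2) = action(u) + action(u')
  have hterm : ∀ j ∈ Finset.range (2 * (nn + 1)),
      S (g1 j, g1 (j + 1)) + S (g2 j, g2 (j + 1))
        = S (u j, u (j + 1)) + S (u' j, u' (j + 1)) := by
    intro j _
    by_cases hj : j + 1 ≤ nn + 1
    · have hj' : j ≤ nn + 1 := by omega
      simp only [hg1, hg2, if_pos hj, if_pos hj']
    · by_cases hje : j = nn + 1
      · subst hje
        have e1 : g1 (nn + 1) = u (nn + 1) := by simp only [hg1]; exact if_pos le_rfl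
        have e2 : g1 (nn + 1 + 1) = u' (nn + 1 + 1) := by
          simp only [hg1]; exact if_neg (by omega)
        have e3 : g2 (nn + 1) = u' (nn + 1) := by simp only [hg2]; exact if_pos le_rfl
        have e4 : g2 (nn + 1 + 1) = u (nn + 1 + 1) := by
          simp only [hg2]; exact if_neg (by omega)
        rw [e1, e2, e3, e4, hn]
        ring
      · have hj1 : ¬ j ≤ nn + 1 := by omega
        have hj2 : ¬ j + 1 ≤ nn + 1 := by omega
        simp only [hg1, hg2, if_neg hj1, if_neg hj2]
        ring
  have hsumeq : (∑ j ∈ Finset.range (2 * (nn + 1)), S (g1 j, g1 (j + 1)))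
      + (∑ j ∈ Finset.range (2 * (nn + 1)), S (g2 j, g2 (j + 1)))
      = (∑ j ∈ Finset.range (2 * (nn + 1)), S (u j, u (j + 1)))
      + (∑ j ∈ Finset.range (2 * (nn + 1)), S (u' j, u' (j + 1))) := by
    rw [← Finset.sum_add_distrib, ← Finset.sum_add_distrib]
    exact Finset.sum_congr rfl hterm
  have hA1 := hu (2 * (nn + 1)) g1 hg10 hg1N
  have hA2 := hu' (2 * (nn + 1)) g2 hg20 hg2N
  have hA1eq : (∑ j ∈ Finset.range (2 * (nn + 1)), S (g1 j, g1 (j + 1)))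
      = ∑ j ∈ Finset.range (2 * (nn + 1)), S (u j, u (j + 1)) := by linarith
  -- g1 is itself minimizing on [0, 2(nn+1)]
  have hming1 : ∀ w : ℕ → Ed d, w 0 = g1 0 → w (2 * (nn + 1)) = g1 (2 * (nn + 1)) →
      ∑ j ∈ Finset.range (2 * (nn + 1)), S (g1 j, g1 (j + 1)) ≤
        ∑ j ∈ Finset.range (2 * (nn + 1)), S (w j, w (j + 1)) := by
    intro w hw0 hwN
    rw [hA1eq]
    exact hu (2 * (nn + 1)) w (by rw [hw0, hg10]) (by rw [hwN, hg1N])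
  -- Euler–Lagrange for u and for g1 at the interior time nn+1
  have helu : ∀ c : Ed d, S (u nn, u (nn + 1)) + S (u (nn + 1), u (nn + 2))
      ≤ S (u nn, c) + S (c, u (nn + 2)) :=
    aux_mod S u (nn + 2) nn (by omega) (hu (nn + 2))
  have helg1' := aux_mod S g1 (2 * (nn + 1)) nn (by omega) hming1
  have eg1 : g1 nn = u nn := by simp only [hg1]; exact if_pos (by omega)
  have eg2 : g1 (nn + 1) = u (nn + 1) := by simp only [hg1]; exact if_pos le_rfl
  have eg3 : g1 (nn + 2) = u' (nn + 2) := by simp only [hg1]; exact if_neg (by omega)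
  have helg1 : ∀ c : Ed d, S (u nn, u (nn + 1)) + S (u (nn + 1), u' (nn + 2))
      ≤ S (u nn, c) + S (c, u' (nn + 2)) := by
    intro c
    have := helg1' c
    rwa [eg1, eg2, eg3] at this
  have hE1 := aux_el S hS (u nn) (u (nn + 1)) (u (nn + 2)) helu
  have hE2 := aux_el S hS (u nn) (u (nn + 1)) (u' (nn + 2)) helg1
  have hfeq : fderiv ℝ (fun w => S (w, u (nn + 2))) (u (nn + 1))
      = fderiv ℝ (fun w => S (w, u' (nn + 2))) (u (nn + 1)) := by
    have h1 := eq_neg_of_add_eq_zero_right hE1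
    have h2 := eq_neg_of_add_eq_zero_right hE2
    rw [h1, h2]
  exact aux_inj S hS α hα hmix (u (nn + 1)) (u (nn + 2)) (u' (nn + 2)) hfeq

/-- Lemma A.5 of the paper. Let `f` be a positive symplectic twist
map of `𝕋^d × ℝ^d` with lift `F`. For every `(m, n) ∈ ℤ^d × ℕ*` and every `q ∈ ℝ^d`,
there exists at most one `p ∈ ℝ^d` such that `F^n(q, p) = (q + m, p)` and the orbit of
`(q, p)` is action-minimizing. -/
theorem statement15 (d : ℕ) (F : Ed d × Ed d → Ed d × Ed d) (S : Ed d × Ed d → ℝ)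
    (hFS : IsSymplecticTwistLift F S) (hpos : PositiveGenFun S)
    (m : Fin d → ℤ) (n : ℕ) (hn : 0 < n) (q : Ed d) :
    ∀ p p' : Ed d,
      F^[n] (q, p) = (q + intVec d m, p) → OrbitMinimizing F S (q, p) →
      F^[n] (q, p') = (q + intVec d m, p') → OrbitMinimizing F S (q, p') →
      p = p' := by
  intro p p' hp hminp hp' hminp'
  obtain ⟨hS2, α, hα, hmix⟩ := hpos
  obtain ⟨nn, rfl⟩ : ∃ nn, n = nn + 1 := ⟨n - 1, by omega⟩
  -- translation of iterates by the integer vector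
  have hshift : ∀ (pp : Ed d), F^[nn + 1] (q, pp) = (q + intVec d m, pp) →
      ∀ j : ℕ, F^[(nn + 1) + j] (q, pp)
        = ((F^[j] (q, pp)).1 + intVec d m, (F^[j] (q, pp)).2) := by
    intro pp hpp j
    rw [add_comm (nn + 1) j, Function.iterate_add_apply, hpp]
    exact aux_lift_iter F hFS.lift m j (q, pp)
  -- the two projected configurations
  have hmain : (F^[nn + 2] (q, p)).1 = (F^[nn + 2] (q, p')).1 := by
    refine aux_main S hS2 α hα hmix (fun j => (F^[j] (q, p)).1)
      (fun j => (F^[j] (q, p')).1) nn (by simp)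
      (by show (F^[nn + 1] (q, p)).1 = (F^[nn + 1] (q, p')).1; rw [hp, hp']) ?_
      (fun N w hw0 hwN => aux_orbit_nat F S (q, p) hminp N w hw0 hwN)
      (fun N w hw0 hwN => aux_orbit_nat F S (q, p') hminp' N w hw0 hwN)
    have e1 := hshift p hp (nn + 1)
    have e2 := hshift p' hp' (nn + 1)
    show (F^[2 * (nn + 1)] (q, p)).1 = (F^[2 * (nn + 1)] (q, p')).1
    rw [show 2 * (nn + 1) = (nn + 1) + (nn + 1) by ring]
    rw [e1, e2]
    simp [hp, hp']
  -- deduce equality of first iterates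
  have hF1 : (F (q, p)).1 = (F (q, p')).1 := by
    have e1 := hshift p hp 1
    have e2 := hshift p' hp' 1
    have e1' : (F^[nn + 2] (q, p)).1 = (F^[1] (q, p)).1 + intVec d m := by
      rw [show nn + 2 = (nn + 1) + 1 from rfl, e1]
    have e2' : (F^[nn + 2] (q, p')).1 = (F^[1] (q, p')).1 + intVec d m := by
      rw [show nn + 2 = (nn + 1) + 1 from rfl, e2]
    rw [e1', e2'] at hmain
    have := add_right_cancel hmain
    simpa using this
  -- injectivity of the twist map
  obtain ⟨-, ginv, -, hleft, -⟩ := hFS.twist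
  have hinj : Function.Injective (fun x : Ed d × Ed d => (x.1, (F x).1)) :=
    hleft.injective
  have heq : (fun x : Ed d × Ed d => (x.1, (F x).1)) (q, p)
      = (fun x : Ed d × Ed d => (x.1, (F x).1)) (q, p') := by
    simp only []
    rw [hF1]
  have := hinj heq
  exact (Prod.ext_iff.mp this).2

end
end
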